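/- (Key step of Sauer's lemma proof) For any class H, perturbation set U, and points z_1,…,z_n, the cardinality of Π^U_H(z_1,…,z_n) is at most the number of subsets S ⊆ {z_1,…,z_n} that are relaxed U-robustly shattered by H. -/

import Mathlib

/-- A finite set `S ⊆ X` is relaxed `U`-robustly shattered by `H` if for every sign
assignment `y` on its elements there are witnesses `x a` with `a ∈ U (x a)` and some
`h ∈ H` constantly equal to `y a` on each `U (x a)`.  (The empty set is always shattered.) -/
def RelShatSet {X : Type*} (H : Set (X → Bool)) (U : X → Set X) (S : Finset X) : Prop :=
  ∀ y : X → Bool, ∃ x : X → X, ∃ h ∈ H,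
    ∀ a ∈ S, a ∈ U (x a) ∧ ∀ w ∈ U (x a), h w = y a

/-- Key step of the Sauer argument: `|Π^U_H(z_1,…,z_n)|` is at most the number of
subsets of `{z_1,…,z_n}` that are relaxed `U`-robustly shattered by `H`. -/
theorem stmt_7 {X : Type*} (H : Set (X → Bool)) (U : X → Set X) (n : ℕ) (z : Fin n → X) :
    Set.ncard {v : Fin n → Bool | ∃ x : Fin n → X, ∃ h ∈ H,
        (∀ i : Fin n, z i ∈ U (x i) ∧ ∀ w ∈ U (x i), h w = h (z i)) ∧
        v = fun i => h (z i)} ≤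
      Set.ncard {S : Finset X | ↑S ⊆ Set.range z ∧ RelShatSet H U S} := by
  classical
  set P : Set (Fin n → Bool) := {v : Fin n → Bool | ∃ x : Fin n → X, ∃ h ∈ H,
        (∀ i : Fin n, z i ∈ U (x i) ∧ ∀ w ∈ U (x i), h w = h (z i)) ∧
        v = fun i => h (z i)} with hPdef
  -- values of a realizable pattern depend only on the point z i
  have hdep : ∀ v ∈ P, ∀ i j : Fin n, z i = z j → v i = v j := by
    rintro v ⟨x, h, hH, hc, rfl⟩ i j hij
    simp only [hij]
  set A : Finset X := Finset.univ.image z with hA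
  set Φ : (Fin n → Bool) → Finset X :=
    fun v => A.filter fun a => ∀ i, z i = a → v i = true with hΦ
  have hmem : ∀ v ∈ P, ∀ i : Fin n, (z i ∈ Φ v ↔ v i = true) := by
    intro v hv i
    constructor
    · intro h
      exact (Finset.mem_filter.1 h).2 i rfl
    · intro h
      exact Finset.mem_filter.2 ⟨Finset.mem_image.2 ⟨i, Finset.mem_univ _, rfl⟩,
        fun j hj => (hdep v hv j i hj).trans h⟩
  have hΦinj : Set.InjOn Φ P := by
    intro v hv w hw hEq
    funext i
    have h1 := hmem v hv i
    have h2 := hmem w hw i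
    rw [hEq] at h1
    exact Bool.eq_iff_iff.2 (h1.symm.trans h2)
  have hPfin : P.Finite := Set.toFinite _
  set G : Finset (Finset X) := hPfin.toFinset.image Φ with hG
  have hcardG : hPfin.toFinset.card = G.card := by
    rw [hG]
    exact (Finset.card_image_of_injOn (by simpa using hΦinj)).symm
  -- every set shattered by G is relaxed shattered by H
  have hsub : ∀ S ∈ G.shatterer, S ∈ {S : Finset X | ↑S ⊆ Set.range z ∧ RelShatSet H U S} := by
    intro S hS
    have hShat : G.Shatters S := Finset.mem_shatterer.1 hS
    have hSrange : (↑S : Set X) ⊆ Set.range z := by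
      obtain ⟨u, hu, hSu⟩ := hShat.exists_superset
      obtain ⟨v, hv, rfl⟩ := Finset.mem_image.1 hu
      intro a ha
      have h1 : a ∈ Φ v := hSu ha
      have h2 : a ∈ A := (Finset.mem_filter.1 h1).1
      obtain ⟨i, _, rfl⟩ := Finset.mem_image.1 h2
      exact ⟨i, rfl⟩
    refine ⟨hSrange, ?_⟩
    intro y
    obtain ⟨u, hu, hSu⟩ := hShat (Finset.filter_subset (fun a => y a = true) S)
    obtain ⟨v, hv, rfl⟩ := Finset.mem_image.1 hu
    have hvP : v ∈ P := hPfin.mem_toFinset.1 hv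
    obtain ⟨x, h, hH, hc, hveq⟩ := hvP
    refine ⟨fun a => if hz : ∃ i, z i = a then x hz.choose else a, h, hH, ?_⟩
    · intro a ha
      have hz : ∃ i, z i = a := hSrange ha
      have hzi : z hz.choose = a := hz.choose_spec
      simp only [dif_pos hz]
      have hU := hc hz.choose
      constructor
      · exact Set.mem_of_eq_of_mem hzi.symm hU.1
      · intro w hw
        have h1 : h w = h (z hz.choose) := hU.2 w hw
        have h2 : h (z hz.choose) = v hz.choose := by rw [hveq]
        have hvP' : v ∈ P := ⟨x, h, hH, hc, hveq⟩
        have hz' : z hz.choose ∈ Φ v ↔ a ∈ Φ v := by rw [hzi]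
        have h3 : (v hz.choose = true) ↔ (a ∈ Φ v) := (hmem v hvP' hz.choose).symm.trans hz'
        have h4 : (a ∈ Φ v) ↔ (y a = true) := by
          constructor
          · intro haΦ
            have : a ∈ S ∩ Φ v := Finset.mem_inter.2 ⟨ha, haΦ⟩
            rw [hSu] at this
            exact (Finset.mem_filter.1 this).2
          · intro hya
            have : a ∈ S.filter (fun a => y a = true) := Finset.mem_filter.2 ⟨ha, hya⟩
            rw [← hSu] at this
            exact (Finset.mem_inter.1 this).2
        rw [h1, h2]
        exact Bool.eq_iff_iff.2 (h3.trans h4)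
  -- finiteness of the RHS
  have hRHSfin : {S : Finset X | ↑S ⊆ Set.range z ∧ RelShatSet H U S}.Finite := by
    apply Set.Finite.subset (A.powerset.finite_toSet)
    intro S hS
    simp only [Finset.coe_powerset, Set.mem_preimage, Set.mem_powerset_iff]
    intro a ha
    obtain ⟨i, rfl⟩ := hS.1 ha
    exact Finset.mem_image.2 ⟨i, Finset.mem_univ _, rfl⟩
  -- put everything together
  have e1 : P.ncard = hPfin.toFinset.card := by
    rw [Set.ncard_eq_toFinset_card' ]
    congr 1
    simp [Set.Finite.toFinset]
  calc P.ncard = G.card := by rw [e1, hcardG]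
    _ ≤ G.shatterer.card := Finset.card_le_card_shatterer G
    _ = (↑G.shatterer : Set (Finset X)).ncard := by rw [Set.ncard_coe_finset]
    _ ≤ _ := Set.ncard_le_ncard hsub hRHSfin
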